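/- Let n ≥ 1, α_i, φ_i complex, Δ real, σ ∈ ℕ, τ ∈ ℤ. Define f_s = Σ_{i=1}^n α_i·sin(φ_i·s·Δ). Let B be the n×n matrix with (k,ℓ+1) entry (1/4)(f_{τ+(k+ℓ)σ} + f_{−τ+(k+ℓ)σ} + f_{τ+(k−ℓ)σ} + f_{−τ+(k−ℓ)σ}) for 1 ≤ k ≤ n, 0 ≤ ℓ ≤ n−1. Then B = U·L·A·Wᵀ where U has (k,i) entry sin(φ_i·k·σ·Δ), W has (ℓ+1,i) entry cos(φ_i·ℓ·σ·Δ), A = diag(α_1,…,α_n) and L = diag(cos(φ_1·τ·Δ),…,cos(φ_n·τ·Δ)). -/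

import Mathlib

lemma sin_four (x y z : ℂ) :
    Complex.sin (x + (y + z)) + Complex.sin (-x + (y + z)) +
    Complex.sin (x + (y - z)) + Complex.sin (-x + (y - z)) =
    4 * (Complex.sin y * Complex.cos x * Complex.cos z) := by
  simp only [Complex.sin_add, Complex.cos_add, Complex.sin_sub, Complex.cos_sub,
    Complex.sin_neg, Complex.cos_neg]
  ring

open Matrix in
theorem sine_matrix_factorization (n : ℕ) (hn : 1 ≤ n)
    (α φ : Fin n → ℂ) (Δ : ℝ) (σ : ℕ) (τ : ℤ)
    (f : ℤ → ℂ) (hf : ∀ s : ℤ, f s = ∑ i, α i * Complex.sin (φ i * s * Δ))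
    (B U W : Matrix (Fin n) (Fin n) ℂ)
    (hB : ∀ k ℓ : Fin n, B k ℓ =
      (1/4) * (f (τ + (((k : ℤ) + 1) + ℓ) * σ) + f (-τ + (((k : ℤ) + 1) + ℓ) * σ) +
               f (τ + (((k : ℤ) + 1) - ℓ) * σ) + f (-τ + (((k : ℤ) + 1) - ℓ) * σ)))
    (hU : ∀ (k i : Fin n), U k i = Complex.sin (φ i * ((k : ℕ) + 1) * σ * Δ))
    (hW : ∀ (ℓ i : Fin n), W ℓ i = Complex.cos (φ i * (ℓ : ℕ) * σ * Δ)) :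
    B = U * Matrix.diagonal (fun i => Complex.cos (φ i * τ * Δ))
          * Matrix.diagonal α * Wᵀ := by
  ext k ℓ
  rw [Matrix.mul_apply]
  simp only [Matrix.mul_diagonal, Matrix.transpose_apply, hU, hW, hB, hf]
  rw [← Finset.sum_add_distrib, ← Finset.sum_add_distrib, ← Finset.sum_add_distrib,
    Finset.mul_sum]
  refine Finset.sum_congr rfl fun i _ => ?_
  have key := sin_four (φ i * τ * Δ) (φ i * ((k : ℕ) + 1) * σ * Δ) (φ i * (ℓ : ℕ) * σ * Δ)
  have e1 : (φ i * (↑(τ + (((k : ℤ) + 1) + ℓ) * σ) : ℤ) * Δ)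
      = φ i * τ * Δ + (φ i * ((k : ℕ) + 1) * σ * Δ + φ i * (ℓ : ℕ) * σ * Δ) := by
    push_cast; ring
  have e2 : (φ i * (↑(-τ + (((k : ℤ) + 1) + ℓ) * σ) : ℤ) * Δ)
      = -(φ i * τ * Δ) + (φ i * ((k : ℕ) + 1) * σ * Δ + φ i * (ℓ : ℕ) * σ * Δ) := by
    push_cast; ring
  have e3 : (φ i * (↑(τ + (((k : ℤ) + 1) - ℓ) * σ) : ℤ) * Δ)
      = φ i * τ * Δ + (φ i * ((k : ℕ) + 1) * σ * Δ - φ i * (ℓ : ℕ) * σ * Δ) := by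
    push_cast; ring
  have e4 : (φ i * (↑(-τ + (((k : ℤ) + 1) - ℓ) * σ) : ℤ) * Δ)
      = -(φ i * τ * Δ) + (φ i * ((k : ℕ) + 1) * σ * Δ - φ i * (ℓ : ℕ) * σ * Δ) := by
    push_cast; ring
  rw [e1, e2, e3, e4]
  have := key
  linear_combination (α i / 4) * key
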